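/- Let a be a weak composition of length n. The set { β^k Q̄_a : k ≥ 0, a a weak composition of length n } spans ℤ[x_1,...,x_n][β] over ℤ and is linearly independent; hence the quasiLascoux polynomials form a basis of Poly_n[β]. -/

import Mathlib

def Dominates (b a : List ℕ) : Prop :=
  b.length = a.length ∧ ∀ i : ℕ, (a.take i).sum ≤ (b.take i).sum

def posPart (a : List ℕ) : List ℕ := a.filter (fun v => v != 0)
def skyline (a : List ℕ) : Finset (ℕ × ℕ) :=
  (Finset.range a.length).biUnion fun i =>
    (Finset.range (a.getD i 0)).image fun j => (i + 1, j + 1)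
abbrev SVF : Type := ℕ → ℕ → Finset ℕ

def shapeLen (b : List ℕ) (i : ℕ) : ℕ := b.getD (i - 1) 0

def SBox (b : List ℕ) (i j : ℕ) : Prop :=
  1 ≤ i ∧ i ≤ b.length ∧ 1 ≤ j ∧ j ≤ shapeLen b i

def anc (F : SVF) (i j : ℕ) : ℕ := (F i j).sup id

noncomputable def infv (F : SVF) (i j : ℕ) : ℕ := sInf (F i j : Set ℕ)

def InvTriple (be al ga : ℕ) : Prop := (ga < al ∧ al ≤ be) ∨ (al ≤ be ∧ be < ga)

def RowOK (b : List ℕ) (F : SVF) (i j v : ℕ) : Prop :=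
  (j = 1 ∨ v ≤ infv F i (j - 1)) ∧ (¬ SBox b i (j + 1) ∨ anc F i (j + 1) ≤ v)

def SVSSF (b : List ℕ) (F : SVF) : Prop :=
  (∀ i j, (F i j).Nonempty ↔ SBox b i j) ∧
  (∀ i j v, v ∈ F i j → 0 < v) ∧
  (∀ j i i', i ≠ i' → ∀ v, v ∈ F i j → v ∉ F i' j) ∧
  (∀ i j, SBox b i j → SBox b i (j + 1) → anc F i (j + 1) ≤ infv F i j) ∧
  (∀ i i' j, i < i' → SBox b i j → SBox b i (j + 1) → SBox b i' (j + 1) →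
      shapeLen b i' ≤ shapeLen b i → InvTriple (anc F i j) (anc F i (j + 1)) (anc F i' (j + 1))) ∧
  (∀ i i' j, i < i' → SBox b i' j → SBox b i' (j + 1) → SBox b i j →
      shapeLen b i < shapeLen b i' → InvTriple (anc F i' j) (anc F i' (j + 1)) (anc F i j)) ∧
  (∀ i j v, SBox b i j → v ∈ F i j → v ≠ anc F i j →
      ∀ i', SBox b i' j → anc F i' j < anc F i j → v < anc F i' j → ¬ RowOK b F i' j v)

def LASSF (b : List ℕ) (F : SVF) : Prop :=
  SVSSF b F ∧ ∀ i, SBox b i 1 → anc F i 1 = i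

def wtF (b : List ℕ) (F : SVF) (v : ℕ) : ℕ :=
  ((skyline b).filter fun p => v ∈ F p.1 p.2).card

def sizeF (b : List ℕ) (F : SVF) : ℕ := ∑ p ∈ skyline b, (F p.1 p.2).card

noncomputable def vmonoF (n : ℕ) (w : ℕ → ℕ) : MvPolynomial (Fin n) (Polynomial ℤ) :=
  ∏ i : Fin n, MvPolynomial.X i ^ w (i.1 + 1)

noncomputable def atomPolyF (n : ℕ) (b : List ℕ) : MvPolynomial (Fin n) (Polynomial ℤ) :=
  ∑ᶠ F ∈ {F : SVF | LASSF b F},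
    MvPolynomial.C (Polynomial.X ^ (sizeF b F - b.sum)) * vmonoF n (wtF b F)

noncomputable def quasiLascouxF (n : ℕ) (a : List ℕ) : MvPolynomial (Fin n) (Polynomial ℤ) :=
  ∑ᶠ b ∈ {b : List ℕ | Dominates b a ∧ posPart b = posPart a}, atomPolyF n b

/-! ### Basic facts about skylines and fillings -/

lemma mem_skyline {b : List ℕ} {p : ℕ × ℕ} : p ∈ skyline b ↔ SBox b p.1 p.2 := by
  unfold skyline SBox shapeLen
  simp only [Finset.mem_biUnion, Finset.mem_range, Finset.mem_image]
  constructor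
  · rintro ⟨i, hi, j, hj, rfl⟩
    refine ⟨Nat.le_add_left 1 i, by omega, Nat.le_add_left 1 j, ?_⟩
    simpa using hj
  · rintro ⟨h1, h2, h3, h4⟩
    refine ⟨p.1 - 1, by omega, p.2 - 1, by omega, ?_⟩
    have : p.1 - 1 + 1 = p.1 := by omega
    have h2' : p.2 - 1 + 1 = p.2 := by omega
    rw [this, h2']

lemma LASSF.empty_iff {b : List ℕ} {F : SVF} (h : LASSF b F) {i j : ℕ} :
    (F i j).Nonempty ↔ SBox b i j := h.1.1 i j

lemma LASSF.pos {b : List ℕ} {F : SVF} (h : LASSF b F) {i j v : ℕ} (hv : v ∈ F i j) : 1 ≤ v :=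
  h.1.2.1 i j v hv

lemma SBox.pred {b : List ℕ} {i j : ℕ} (h : SBox b i (j + 1)) (hj : 1 ≤ j) : SBox b i j :=
  ⟨h.1, h.2.1, hj, le_trans (Nat.le_succ j) h.2.2.2⟩

lemma LASSF.val_le_row {b : List ℕ} {F : SVF} (h : LASSF b F) :
    ∀ j i v, v ∈ F i j → v ≤ i := by
  intro j
  induction j with
  | zero =>
    intro i v hv
    have := (h.1.1 i 0).mp ⟨v, hv⟩
    exact absurd this.2.2.1 (by omega)
  | succ j ih =>
    intro i v hv
    have hbox : SBox b i (j + 1) := (h.1.1 i (j+1)).mp ⟨v, hv⟩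
    rcases Nat.eq_zero_or_pos j with hj | hj
    · subst hj
      have : v ≤ anc F i 1 := Finset.le_sup (f := id) hv
      rwa [h.2 i hbox] at this
    · have hboxj : SBox b i j := hbox.pred hj
      obtain ⟨w, hw⟩ := (h.1.1 i j).mpr hboxj
      have h1 : v ≤ anc F i (j + 1) := Finset.le_sup (f := id) hv
      have h2 : anc F i (j + 1) ≤ infv F i j := h.1.2.2.2.1 i j hboxj hbox
      have h3 : infv F i j ≤ w := Nat.sInf_le (by exact hw)
      exact le_trans h1 (le_trans h2 (le_trans h3 (ih i w hw)))

lemma LASSF.col_distinct {b : List ℕ} {F : SVF} (h : LASSF b F) {i i' j v : ℕ}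
    (hne : i ≠ i') (hv : v ∈ F i j) : v ∉ F i' j := h.1.2.2.1 j i i' hne v hv

/-! ### The superstandard filling -/

instance (b : List ℕ) (i j : ℕ) : Decidable (SBox b i j) :=
  decidable_of_iff (1 ≤ i ∧ i ≤ b.length ∧ 1 ≤ j ∧ j ≤ shapeLen b i) Iff.rfl

def ssf (b : List ℕ) : SVF := fun i j =>
  if SBox b i j then {i} else ∅

lemma ssf_of_box {b : List ℕ} {i j : ℕ} (h : SBox b i j) : ssf b i j = {i} := if_pos h

lemma ssf_of_not_box {b : List ℕ} {i j : ℕ} (h : ¬ SBox b i j) : ssf b i j = ∅ := if_neg h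

lemma anc_ssf {b : List ℕ} {i j : ℕ} (h : SBox b i j) : anc (ssf b) i j = i := by
  unfold anc; rw [ssf_of_box h]; simp

lemma infv_ssf {b : List ℕ} {i j : ℕ} (h : SBox b i j) : infv (ssf b) i j = i := by
  unfold infv; rw [ssf_of_box h]; simp

lemma lassf_ssf (b : List ℕ) : LASSF b (ssf b) := by
  constructor
  · refine ⟨?_, ?_, ?_, ?_, ?_, ?_, ?_⟩
    · intro i j
      unfold ssf
      split <;> simp [*]
    · intro i j v hv
      unfold ssf at hv
      split at hv
      · rename_i hbox
        simp at hv; subst hv; exact hbox.1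
      · simp at hv
    · intro j i i' hne v hv
      unfold ssf at *
      split at hv
      · simp at hv; subst hv
        split
        · simp [hne]
        · simp
      · simp at hv
    · intro i j h1 h2
      rw [anc_ssf h2, infv_ssf h1]
    · intro i i' j hlt h1 h2 h3 _
      rw [anc_ssf h1, anc_ssf h2, anc_ssf h3]
      exact Or.inr ⟨le_refl i, hlt⟩
    · intro i i' j hlt h1 h2 h3 _
      rw [anc_ssf h1, anc_ssf h2, anc_ssf h3]
      exact Or.inl ⟨hlt, le_refl i'⟩
    · intro i j v hbox hv hne
      rw [ssf_of_box hbox] at hv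
      simp at hv; subst hv
      exact absurd (anc_ssf hbox).symm hne
  · intro i h; exact anc_ssf h

lemma wtF_ssf (b : List ℕ) (v : ℕ) : wtF b (ssf b) v = ((skyline b).filter fun p => p.1 = v).card := by
  unfold wtF
  congr 1
  apply Finset.filter_congr
  intro p hp
  rw [ssf_of_box (mem_skyline.mp hp)]
  simp [eq_comm]

/-! ### List lemmas -/

lemma take_sum_eq (l : List ℕ) (V : ℕ) :
    (l.take V).sum = ∑ i ∈ Finset.range l.length, (if i < V then l.getD i 0 else 0) := by
  induction l generalizing V with
  | nil => simp
  | cons h t ih =>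
    rw [List.length_cons, Finset.sum_range_succ']
    cases V with
    | zero => simp
    | succ W =>
      simp only [List.take_succ_cons, List.sum_cons, List.getD_cons_succ, List.getD_cons_zero]
      rw [ih W]
      simp only [Nat.succ_lt_succ_iff, Nat.zero_lt_succ, if_true]
      omega

lemma take_succ_sum (l : List ℕ) (i : ℕ) :
    (l.take (i + 1)).sum = (l.take i).sum + l.getD i 0 := by
  rw [take_sum_eq, take_sum_eq]
  rcases Nat.lt_or_ge i l.length with h | h
  · have key : ∀ j ∈ Finset.range l.length, (if j < i + 1 then l.getD j 0 else 0)
        = (if j < i then l.getD j 0 else 0) + (if j = i then l.getD i 0 else 0) := by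
      intro j _
      by_cases hji : j = i
      · subst hji; simp [Nat.lt_irrefl]
      · have hiff : (j < i + 1) ↔ (j < i) := by omega
        simp [hji, hiff]
    rw [Finset.sum_congr rfl key, Finset.sum_add_distrib,
      Finset.sum_ite_eq' (Finset.range l.length) i]
    simp [h]
  · have h1 : ∀ j ∈ Finset.range l.length, (if j < i + 1 then l.getD j 0 else 0)
        = (if j < i then l.getD j 0 else 0) := by
      intro j hj
      simp only [Finset.mem_range] at hj
      have : j < i := by omega
      simp [this, Nat.lt_succ_of_lt this]
    rw [Finset.sum_congr rfl h1, List.getD_eq_default]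
    · omega
    · exact h

lemma eq_of_take_sum_eq {a b : List ℕ} (hlen : b.length = a.length)
    (h : ∀ V, (b.take V).sum = (a.take V).sum) : b = a := by
  apply List.ext_getElem hlen
  intro i h1 h2
  have e1 := take_succ_sum b i
  have e2 := take_succ_sum a i
  rw [List.getD_eq_getElem?_getD, List.getElem?_eq_getElem h1] at e1
  rw [List.getD_eq_getElem?_getD, List.getElem?_eq_getElem h2] at e2
  rw [h (i+1), h i] at e1
  simp only [Option.getD_some] at e1 e2
  omega

def listMax (l : List ℕ) : ℕ := l.foldr max 0

lemma listMax_posPart (l : List ℕ) : listMax (posPart l) = listMax l := by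
  induction l with
  | nil => rfl
  | cons h t ih =>
    unfold _root_.posPart listMax at *
    by_cases hh : h = 0
    · subst hh; simpa using ih
    · have : (h != 0) = true := by simpa using hh
      simp only [List.filter_cons, this, if_true, List.foldr_cons]
      rw [ih]

lemma sum_posPart (l : List ℕ) : (posPart l).sum = l.sum := by
  induction l with
  | nil => rfl
  | cons h t ih =>
    unfold _root_.posPart at *
    by_cases hh : h = 0
    · subst hh; simpa using ih
    · have : (h != 0) = true := by simpa using hh
      simp only [List.filter_cons, this, if_true, List.sum_cons]
      rw [ih]

lemma getD_le_listMax (l : List ℕ) (i : ℕ) : l.getD i 0 ≤ listMax l := by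
  induction l generalizing i with
  | nil => simp [listMax]
  | cons h t ih =>
    cases i with
    | zero => simp only [List.getD_cons_zero, listMax, List.foldr_cons]; exact le_max_left _ _
    | succ k =>
      simp only [List.getD_cons_succ, listMax, List.foldr_cons]
      exact le_trans (ih k) (le_max_right _ _)

lemma shapeLen_le_listMax (b : List ℕ) (i : ℕ) : shapeLen b i ≤ listMax b :=
  getD_le_listMax b (i - 1)

/-! ### Counting boxes -/

lemma card_skyline_filter (b : List ℕ) (V : ℕ) :
    ((skyline b).filter fun p => p.1 ≤ V).card = (b.take V).sum := by
  unfold skyline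
  rw [Finset.filter_biUnion]
  rw [Finset.card_biUnion]
  · rw [take_sum_eq]
    apply Finset.sum_congr rfl
    intro i _
    rw [Finset.filter_image]
    by_cases hi : i + 1 ≤ V
    · have : ((Finset.range (b.getD i 0)).filter fun j => ((i+1:ℕ), (j+1:ℕ)).1 ≤ V)
          = Finset.range (b.getD i 0) := by
        apply Finset.filter_true_of_mem
        intro j _; exact hi
      rw [this, Finset.card_image_of_injective _ (by intro x y hxy; simpa using hxy)]
      simp only [Finset.card_range]
      rw [if_pos (by omega)]
    · have : ((Finset.range (b.getD i 0)).filter fun j => ((i+1:ℕ), (j+1:ℕ)).1 ≤ V)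
          = ∅ := by
        apply Finset.filter_false_of_mem
        intro j _; exact hi
      rw [this]
      simp only [Finset.image_empty, Finset.card_empty]
      rw [if_neg (by omega)]
  · intro x _ y _ hxy
    apply Finset.disjoint_left.mpr
    intro p hp hq
    simp only [Finset.mem_filter, Finset.mem_image, Finset.mem_range] at hp hq
    obtain ⟨⟨j, _, rfl⟩, _⟩ := hp
    obtain ⟨⟨k, _, hk⟩, _⟩ := hq
    have := congrArg Prod.fst hk
    simp only at this
    exact hxy (by omega)

lemma card_skyline (b : List ℕ) : (skyline b).card = b.sum := by
  have := card_skyline_filter b b.length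
  rw [List.take_length] at this
  rw [← this]
  congr 1
  symm
  apply Finset.filter_true_of_mem
  intro p hp
  exact (mem_skyline.mp hp).2.1

/-! ### Weight sums -/

lemma sum_wt_eq (b : List ℕ) (F : SVF) (V : ℕ) :
    ∑ v ∈ Finset.Icc 1 V, wtF b F v
      = ∑ p ∈ skyline b, ((Finset.Icc 1 V).filter (· ∈ F p.1 p.2)).card := by
  unfold wtF
  have h1 : ∀ v, ((skyline b).filter fun p => v ∈ F p.1 p.2).card
      = ∑ p ∈ skyline b, (if v ∈ F p.1 p.2 then 1 else 0) := fun v => Finset.card_filter _ _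
  simp only [h1]
  rw [Finset.sum_comm]
  apply Finset.sum_congr rfl
  intro p _
  rw [Finset.card_filter]

lemma filter_eq_self_of_le {b : List ℕ} {F : SVF} (hF : LASSF b F) {p : ℕ × ℕ}
    (hp : p ∈ skyline b) {V : ℕ} (hV : b.length ≤ V) :
    ((Finset.Icc 1 V).filter (· ∈ F p.1 p.2)) = F p.1 p.2 := by
  apply Finset.Subset.antisymm
  · intro v hv; exact (Finset.mem_filter.mp hv).2
  · intro v hv
    rw [Finset.mem_filter, Finset.mem_Icc]
    have h1 := hF.pos hv
    have h2 := hF.val_le_row p.2 p.1 v hv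
    have h3 := (mem_skyline.mp hp).2.1
    exact ⟨⟨h1, by omega⟩, hv⟩

lemma sizeF_eq_sum_wt {b : List ℕ} {F : SVF} (hF : LASSF b F) {V : ℕ} (hV : b.length ≤ V) :
    sizeF b F = ∑ v ∈ Finset.Icc 1 V, wtF b F v := by
  rw [sum_wt_eq]
  unfold sizeF
  apply Finset.sum_congr rfl
  intro p hp
  rw [filter_eq_self_of_le hF hp hV]

lemma sum_wt_ge {b : List ℕ} {F : SVF} (hF : LASSF b F) (V : ℕ) :
    (b.take V).sum ≤ ∑ v ∈ Finset.Icc 1 V, wtF b F v := by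
  rw [sum_wt_eq, ← card_skyline_filter b V, Finset.card_filter]
  apply Finset.sum_le_sum
  intro p hp
  by_cases h : p.1 ≤ V
  · rw [if_pos h]
    rw [Nat.one_le_iff_ne_zero, ← Nat.pos_iff_ne_zero, Finset.card_pos]
    obtain ⟨v, hv⟩ := (hF.empty_iff).mpr (mem_skyline.mp hp)
    refine ⟨v, Finset.mem_filter.mpr ⟨Finset.mem_Icc.mpr ⟨hF.pos hv, ?_⟩, hv⟩⟩
    exact le_trans (hF.val_le_row p.2 p.1 v hv) h
  · rw [if_neg h]; exact Nat.zero_le _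

lemma wt_eq_zero_of_gt {b : List ℕ} {F : SVF} (hF : LASSF b F) {v : ℕ} (hv : b.length < v) :
    wtF b F v = 0 := by
  unfold wtF
  rw [Finset.card_eq_zero, Finset.filter_eq_empty_iff]
  intro p hp hmem
  have h2 := hF.val_le_row p.2 p.1 v hmem
  have h3 := (mem_skyline.mp hp).2.1
  omega

lemma wt_le_listMax {b : List ℕ} {F : SVF} (hF : LASSF b F) (v : ℕ) :
    wtF b F v ≤ listMax b := by
  unfold wtF
  have : ((skyline b).filter fun p => v ∈ F p.1 p.2).card ≤ (Finset.Icc 1 (listMax b)).card := by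
    apply Finset.card_le_card_of_injOn (fun p => p.2)
    · intro p hp
      rw [Finset.mem_coe, Finset.mem_filter] at hp
      have hbox := mem_skyline.mp hp.1
      rw [Finset.mem_coe, Finset.mem_Icc]
      exact ⟨hbox.2.2.1, le_trans hbox.2.2.2 (shapeLen_le_listMax b p.1)⟩
    · intro p hp q hq hpq
      rw [Finset.mem_coe, Finset.mem_filter] at hp hq
      have hpq' : p.2 = q.2 := hpq
      have : p.1 = q.1 := by
        by_contra hne
        exact hF.col_distinct hne (hpq' ▸ hp.2) hq.2
      exact Prod.ext this hpq'
  simpa using this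

/-! ### take sums vs Icc sums -/

lemma take_sum_eq' (a : List ℕ) (V : ℕ) (hV : V ≤ a.length) :
    (a.take V).sum = ∑ i ∈ Finset.range V, a.getD i 0 := by
  rw [take_sum_eq]
  rw [← Finset.sum_subset (Finset.range_subset_range.mpr hV)]
  · apply Finset.sum_congr rfl
    intro i hi
    rw [if_pos (Finset.mem_range.mp hi)]
  · intro i _ hi
    rw [if_neg (by simpa using hi)]

lemma sum_Icc_one {M : Type*} [AddCommMonoid M] (f : ℕ → M) (V : ℕ) :
    ∑ v ∈ Finset.Icc 1 V, f v = ∑ i ∈ Finset.range V, f (i + 1) := by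
  induction V with
  | zero => simp
  | succ W ih =>
    rw [Finset.sum_Icc_succ_top (by omega), ih, Finset.sum_range_succ]

lemma icc_sum_getD (a : List ℕ) (V : ℕ) (hV : V ≤ a.length) :
    ∑ v ∈ Finset.Icc 1 V, a.getD (v - 1) 0 = (a.take V).sum := by
  rw [take_sum_eq' a V hV, sum_Icc_one]
  simp

/-! ### Exponent = a forces b = a and F = ssf -/

lemma shape_eq_of_wt {a b : List ℕ} {F : SVF} (hF : LASSF b F)
    (hdom : Dominates b a)
    (hwt : ∀ v, 1 ≤ v → v ≤ a.length → wtF b F v = a.getD (v - 1) 0) : b = a := by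
  have hlen := hdom.1
  apply eq_of_take_sum_eq hlen
  have key : ∀ V, V ≤ a.length → (b.take V).sum = (a.take V).sum := by
    intro V hV
    have h1 : ∑ v ∈ Finset.Icc 1 V, wtF b F v = (a.take V).sum := by
      rw [← icc_sum_getD a V hV]
      apply Finset.sum_congr rfl
      intro v hv
      rw [Finset.mem_Icc] at hv
      exact hwt v hv.1 (le_trans hv.2 hV)
    have h2 := sum_wt_ge hF V
    have h3 := hdom.2 V
    omega
  intro V
  by_cases hV : V ≤ a.length
  · exact key V hV
  · have e1 : b.take V = b := List.take_of_length_le (by omega)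
    have e2 : a.take V = a := List.take_of_length_le (by omega)
    have e3 := key a.length le_rfl
    rw [e1, e2]
    rw [← hlen] at e3
    rwa [List.take_length, hlen, List.take_length] at e3

lemma filling_eq_ssf_of_wt {a : List ℕ} {F : SVF} (hF : LASSF a F)
    (hwt : ∀ v, 1 ≤ v → v ≤ a.length → wtF a F v = a.getD (v - 1) 0) : F = ssf a := by
  -- pointwise card equality
  have hcard : ∀ V, V ≤ a.length → ∀ p ∈ skyline a,
      ((Finset.Icc 1 V).filter (· ∈ F p.1 p.2)).card = (if p.1 ≤ V then 1 else 0) := by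
    intro V hV
    have hsum : ∑ p ∈ skyline a, ((Finset.Icc 1 V).filter (· ∈ F p.1 p.2)).card
        = ∑ p ∈ skyline a, (if p.1 ≤ V then 1 else 0) := by
      rw [← sum_wt_eq]
      have h1 : ∑ v ∈ Finset.Icc 1 V, wtF a F v = (a.take V).sum := by
        rw [← icc_sum_getD a V hV]
        apply Finset.sum_congr rfl
        intro v hv
        rw [Finset.mem_Icc] at hv
        exact hwt v hv.1 (le_trans hv.2 hV)
      rw [h1, ← Finset.card_filter, card_skyline_filter]
    have hle : ∀ p ∈ skyline a, (if p.1 ≤ V then 1 else 0)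
        ≤ ((Finset.Icc 1 V).filter (· ∈ F p.1 p.2)).card := by
      intro p hp
      by_cases h : p.1 ≤ V
      · rw [if_pos h, Nat.one_le_iff_ne_zero, ← Nat.pos_iff_ne_zero, Finset.card_pos]
        obtain ⟨v, hv⟩ := (hF.empty_iff).mpr (mem_skyline.mp hp)
        refine ⟨v, Finset.mem_filter.mpr ⟨Finset.mem_Icc.mpr ⟨hF.pos hv, ?_⟩, hv⟩⟩
        exact le_trans (hF.val_le_row p.2 p.1 v hv) h
      · rw [if_neg h]; exact Nat.zero_le _
    intro p hp
    by_contra hne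
    have hlt : (if p.1 ≤ V then 1 else 0)
        < ((Finset.Icc 1 V).filter (· ∈ F p.1 p.2)).card :=
      lt_of_le_of_ne (hle p hp) (fun h => hne h.symm)
    have : ∑ p ∈ skyline a, (if p.1 ≤ V then 1 else 0)
        < ∑ p ∈ skyline a, ((Finset.Icc 1 V).filter (· ∈ F p.1 p.2)).card :=
      Finset.sum_lt_sum hle ⟨p, hp, hlt⟩
    omega
  -- now each box is the singleton {row}
  have hbox : ∀ p ∈ skyline a, F p.1 p.2 = {p.1} := by
    intro p hp
    have hbx := mem_skyline.mp hp
    have hrow : p.1 ≤ a.length := hbx.2.1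
    have h1p : 1 ≤ p.1 := hbx.1
    have h1 : ((Finset.Icc 1 p.1).filter (· ∈ F p.1 p.2)).card = 1 := by
      rw [hcard p.1 hrow p hp, if_pos le_rfl]
    have hfull : (Finset.Icc 1 p.1).filter (· ∈ F p.1 p.2) = F p.1 p.2 := by
      apply Finset.Subset.antisymm
      · intro v hv; exact (Finset.mem_filter.mp hv).2
      · intro v hv
        exact Finset.mem_filter.mpr ⟨Finset.mem_Icc.mpr ⟨hF.pos hv, hF.val_le_row _ _ _ hv⟩, hv⟩
    rw [hfull] at h1
    obtain ⟨x, hx⟩ := Finset.card_eq_one.mp h1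
    have hxmem : x ∈ F p.1 p.2 := by rw [hx]; exact Finset.mem_singleton_self x
    have h0 : ((Finset.Icc 1 (p.1 - 1)).filter (· ∈ F p.1 p.2)).card = 0 := by
      rw [hcard (p.1 - 1) (by omega) p hp, if_neg (by omega)]
    rw [Finset.card_eq_zero, Finset.filter_eq_empty_iff] at h0
    have hxn : ¬ (1 ≤ x ∧ x ≤ p.1 - 1) := by
      intro hc
      exact h0 (Finset.mem_Icc.mpr hc) hxmem
    have h1x := hF.pos hxmem
    have h2x := hF.val_le_row p.2 p.1 x hxmem
    have : x = p.1 := by omega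
    rw [hx, this]
  funext i j
  by_cases hb : SBox a i j
  · rw [ssf_of_box hb]
    exact hbox (i, j) (mem_skyline.mpr hb)
  · rw [ssf_of_not_box hb]
    rw [← Finset.not_nonempty_iff_eq_empty]
    rw [hF.empty_iff]
    exact hb

lemma wtF_ssf_eq (a : List ℕ) (v : ℕ) (hv : 1 ≤ v) : wtF a (ssf a) v = a.getD (v - 1) 0 := by
  rw [wtF_ssf]
  have hsplit : (skyline a).filter (fun p => p.1 ≤ v)
      = ((skyline a).filter (fun p => p.1 ≤ v - 1)) ∪ ((skyline a).filter (fun p => p.1 = v)) := by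
    ext p
    simp only [Finset.mem_filter, Finset.mem_union]
    constructor
    · rintro ⟨hp, h⟩
      by_cases hq : p.1 = v
      · exact Or.inr ⟨hp, hq⟩
      · exact Or.inl ⟨hp, by omega⟩
    · rintro (⟨hp, h⟩ | ⟨hp, h⟩)
      · exact ⟨hp, by omega⟩
      · exact ⟨hp, by omega⟩
  have hdisj : Disjoint ((skyline a).filter (fun p => p.1 ≤ v - 1))
      ((skyline a).filter (fun p => p.1 = v)) := by
    apply Finset.disjoint_left.mpr
    intro p hp hq
    rw [Finset.mem_filter] at hp hq
    omega
  have hcards := congrArg Finset.card hsplit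
  rw [Finset.card_union_of_disjoint hdisj, card_skyline_filter, card_skyline_filter] at hcards
  have hv' : v - 1 + 1 = v := by omega
  have hts := take_succ_sum a (v - 1)
  rw [hv'] at hts
  omega

/-! ### Finiteness -/

lemma lassf_finite (b : List ℕ) : {F : SVF | LASSF b F}.Finite := by
  rw [← Set.finite_coe_iff]
  let L := b.length
  let M := listMax b
  have hbound : ∀ (F : {F : SVF // LASSF b F}) (i j : ℕ), ∀ v ∈ F.1 i j, v < L + 1 := by
    intro F i j v hv
    have h1 := F.2.val_le_row j i v hv
    have h2 : SBox b i j := (F.2.empty_iff).mp ⟨v, hv⟩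
    have : i ≤ L := h2.2.1
    omega
  apply Finite.of_injective
    (fun F : {F : SVF // LASSF b F} =>
      (fun (i : Fin (L+1)) (j : Fin (M+1)) => (F.1 i.1 j.1).attachFin (hbound F i.1 j.1)))
  intro F G hFG
  apply Subtype.ext
  funext i j
  by_cases hb : SBox b i j
  · have hiL : i < L + 1 := by have := hb.2.1; omega
    have hjM : j < M + 1 := by
      have := hb.2.2.2
      have := shapeLen_le_listMax b i
      omega
    have heq := congrFun (congrFun hFG ⟨i, hiL⟩) ⟨j, hjM⟩
    simp only at heq
    apply Finset.ext
    intro v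
    constructor
    · intro hv
      have hvL : v < L + 1 := hbound F i j v hv
      have hm : (⟨v, hvL⟩ : Fin (L+1)) ∈ (F.1 i j).attachFin (hbound F i j) :=
        (Finset.mem_attachFin _).mpr hv
      rw [heq] at hm
      exact (Finset.mem_attachFin _).mp hm
    · intro hv
      have hvL : v < L + 1 := hbound G i j v hv
      have hm : (⟨v, hvL⟩ : Fin (L+1)) ∈ (G.1 i j).attachFin (hbound G i j) :=
        (Finset.mem_attachFin _).mpr hv
      rw [← heq] at hm
      exact (Finset.mem_attachFin _).mp hm
  · have h1 : F.1 i j = ∅ := by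
      rw [← Finset.not_nonempty_iff_eq_empty, F.2.empty_iff]; exact hb
    have h2 : G.1 i j = ∅ := by
      rw [← Finset.not_nonempty_iff_eq_empty, G.2.empty_iff]; exact hb
    rw [h1, h2]

lemma le_listMax_of_mem {l : List ℕ} {x : ℕ} (hx : x ∈ l) : x ≤ listMax l := by
  induction l with
  | nil => simp at hx
  | cons h t ih =>
    unfold listMax at *
    rcases List.mem_cons.mp hx with rfl | hx'
    · exact le_max_left _ _
    · exact le_trans (ih hx') (le_max_right _ _)

lemma lists_finite (n s : ℕ) : {l : List ℕ | l.length = n ∧ ∀ x ∈ l, x ≤ s}.Finite := by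
  induction n with
  | zero =>
    apply Set.Finite.subset (Set.finite_singleton ([] : List ℕ))
    rintro l ⟨hl, -⟩
    simp [List.length_eq_zero_iff.mp hl]
  | succ k ih =>
    apply Set.Finite.subset (Set.Finite.image (fun p : ℕ × List ℕ => p.1 :: p.2)
      ((Set.finite_Icc 0 s).prod ih))
    rintro l ⟨hl, hbd⟩
    cases l with
    | nil => simp at hl
    | cons h t =>
      refine ⟨(h, t), ⟨?_, ?_, ?_⟩, rfl⟩
      · simp [Set.mem_Icc]; exact hbd h List.mem_cons_self
      · simpa using hl
      · intro x hx; exact hbd x (List.mem_cons_of_mem h hx)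

lemma bset_finite (a : List ℕ) :
    {b : List ℕ | Dominates b a ∧ posPart b = posPart a}.Finite := by
  apply Set.Finite.subset (lists_finite a.length (listMax a))
  rintro b ⟨hdom, hpos⟩
  refine ⟨hdom.1, ?_⟩
  intro x hx
  have := le_listMax_of_mem hx
  rw [← listMax_posPart b, hpos, listMax_posPart a] at this
  exact this

lemma mem_bset_self (a : List ℕ) :
    a ∈ {b : List ℕ | Dominates b a ∧ posPart b = posPart a} :=
  ⟨⟨rfl, fun _ => le_rfl⟩, rfl⟩

/-! ### Exponents and coefficients -/

noncomputable def expw (n : ℕ) (w : ℕ → ℕ) : Fin n →₀ ℕ :=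
  Finsupp.equivFunOnFinite.symm (fun i => w (i.1 + 1))

@[simp] lemma expw_apply (n : ℕ) (w : ℕ → ℕ) (i : Fin n) : expw n w i = w (i.1 + 1) := rfl

noncomputable def Ea (n : ℕ) (a : List ℕ) : Fin n →₀ ℕ := expw n (fun v => a.getD (v - 1) 0)

@[simp] lemma Ea_apply (n : ℕ) (a : List ℕ) (i : Fin n) : Ea n a i = a.getD i.1 0 := by
  unfold Ea
  rw [expw_apply, Nat.add_sub_cancel]

lemma vmonoF_eq (n : ℕ) (w : ℕ → ℕ) :
    vmonoF n w = MvPolynomial.monomial (expw n w) 1 := by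
  rw [MvPolynomial.monomial_eq, map_one, one_mul, Finsupp.prod]
  unfold vmonoF
  show (∏ i : Fin n, MvPolynomial.X i ^ (expw n w) i) = _
  symm
  apply Finset.prod_subset (Finset.subset_univ _)
  intro i _ hi
  rw [Finsupp.notMem_support_iff.mp hi, pow_zero]

lemma atom_eq_sum (n : ℕ) (b : List ℕ) :
    atomPolyF n b = ∑ F ∈ (lassf_finite b).toFinset,
      MvPolynomial.C (Polynomial.X ^ (sizeF b F - b.sum)) *
        MvPolynomial.monomial (expw n (wtF b F)) 1 := by
  unfold atomPolyF
  rw [finsum_mem_eq_finite_toFinset_sum _ (lassf_finite b)]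
  apply Finset.sum_congr rfl
  intro F _
  rw [vmonoF_eq]

lemma coeff_atom (n : ℕ) (b : List ℕ) (m : Fin n →₀ ℕ) :
    MvPolynomial.coeff m (atomPolyF n b)
      = ∑ F ∈ (lassf_finite b).toFinset,
          (if expw n (wtF b F) = m then Polynomial.X ^ (sizeF b F - b.sum) else 0) := by
  rw [atom_eq_sum, MvPolynomial.coeff_sum]
  apply Finset.sum_congr rfl
  intro F _
  rw [MvPolynomial.coeff_C_mul, MvPolynomial.coeff_monomial]
  split <;> simp

lemma coeff_atom_ne_zero {n : ℕ} {b : List ℕ} {m : Fin n →₀ ℕ}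
    (h : MvPolynomial.coeff m (atomPolyF n b) ≠ 0) :
    ∃ F, LASSF b F ∧ expw n (wtF b F) = m := by
  by_contra hc
  push_neg at hc
  apply h
  rw [coeff_atom]
  apply Finset.sum_eq_zero
  intro F hF
  rw [Set.Finite.mem_toFinset] at hF
  rw [if_neg (hc F hF)]

lemma expw_wt_eq_Ea_iff {n : ℕ} {b a : List ℕ} (F : SVF) (hb : b.length = n) (ha : a.length = n) :
    expw n (wtF b F) = Ea n a ↔ ∀ v, 1 ≤ v → v ≤ a.length → wtF b F v = a.getD (v - 1) 0 := by
  constructor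
  · intro h v h1 h2
    have hv : v - 1 < n := by omega
    have := DFunLike.congr_fun h ⟨v - 1, hv⟩
    rw [expw_apply, Ea_apply] at this
    have hv1 : v - 1 + 1 = v := by omega
    rwa [hv1] at this
  · intro h
    apply Finsupp.ext
    intro i
    rw [expw_apply, Ea_apply]
    have := h (i.1 + 1) (by omega) (by omega)
    rwa [Nat.add_sub_cancel] at this

lemma sizeF_ssf (a : List ℕ) : sizeF a (ssf a) = a.sum := by
  rw [sizeF_eq_sum_wt (lassf_ssf a) (le_refl a.length)]
  have : ∀ v ∈ Finset.Icc 1 a.length, wtF a (ssf a) v = a.getD (v - 1) 0 := by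
    intro v hv
    exact wtF_ssf_eq a v (Finset.mem_Icc.mp hv).1
  rw [Finset.sum_congr rfl this, icc_sum_getD a a.length le_rfl, List.take_length]

lemma coeff_atom_Ea {n : ℕ} {a b : List ℕ} (ha : a.length = n)
    (hdom : Dominates b a) (hpos : posPart b = posPart a) :
    MvPolynomial.coeff (Ea n a) (atomPolyF n b) = if b = a then 1 else 0 := by
  have hb : b.length = n := by rw [hdom.1, ha]
  rw [coeff_atom]
  by_cases hba : b = a
  · subst hba
    rw [if_pos rfl]
    rw [Finset.sum_eq_single_of_mem (ssf b)]
    · rw [if_pos, sizeF_ssf, Nat.sub_self, pow_zero]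
      rw [expw_wt_eq_Ea_iff _ hb hb]
      intro v h1 _
      exact wtF_ssf_eq b v h1
    · rw [Set.Finite.mem_toFinset]
      exact lassf_ssf b
    · intro F hF hne
      rw [Set.Finite.mem_toFinset] at hF
      rw [if_neg]
      intro hc
      rw [expw_wt_eq_Ea_iff F hb hb] at hc
      exact hne (filling_eq_ssf_of_wt hF hc)
  · rw [if_neg hba]
    apply Finset.sum_eq_zero
    intro F hF
    rw [Set.Finite.mem_toFinset] at hF
    rw [if_neg]
    intro hc
    rw [expw_wt_eq_Ea_iff F hb ha] at hc
    exact hba (shape_eq_of_wt hF hdom hc)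

lemma quasi_eq_sum (n : ℕ) (a : List ℕ) :
    quasiLascouxF n a = ∑ b ∈ (bset_finite a).toFinset, atomPolyF n b :=
  finsum_mem_eq_finite_toFinset_sum _ _

lemma coeff_Ea_quasi {n : ℕ} {a : List ℕ} (ha : a.length = n) :
    MvPolynomial.coeff (Ea n a) (quasiLascouxF n a) = 1 := by
  rw [quasi_eq_sum, MvPolynomial.coeff_sum]
  have : ∀ b ∈ (bset_finite a).toFinset,
      MvPolynomial.coeff (Ea n a) (atomPolyF n b) = if b = a then 1 else 0 := by
    intro b hb
    rw [Set.Finite.mem_toFinset] at hb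
    exact coeff_atom_Ea ha hb.1 hb.2
  rw [Finset.sum_congr rfl this, Finset.sum_ite_eq' _ a (fun _ => (1 : Polynomial ℤ))]
  rw [if_pos (Set.Finite.mem_toFinset _ |>.mpr (mem_bset_self a))]

lemma coeff_quasi_ne_zero {n : ℕ} {a : List ℕ} {m : Fin n →₀ ℕ}
    (h : MvPolynomial.coeff m (quasiLascouxF n a) ≠ 0) :
    ∃ b F, Dominates b a ∧ posPart b = posPart a ∧ LASSF b F ∧ expw n (wtF b F) = m := by
  rw [quasi_eq_sum, MvPolynomial.coeff_sum] at h
  obtain ⟨b, hb, hbne⟩ := Finset.exists_ne_zero_of_sum_ne_zero h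
  rw [Set.Finite.mem_toFinset] at hb
  obtain ⟨F, hF, hwt⟩ := coeff_atom_ne_zero hbne
  exact ⟨b, F, hb.1, hb.2, hF, hwt⟩

/-! ### The order -/

def Mxe {n : ℕ} (m : Fin n →₀ ℕ) : ℕ := Finset.univ.sup ⇑m

def pse {n : ℕ} (m : Fin n →₀ ℕ) (V : ℕ) : ℕ := ∑ i : Fin n, if i.1 + 1 ≤ V then m i else 0

def rP {n : ℕ} (c d : Fin n →₀ ℕ) : Prop :=
  c ≠ d ∧ Mxe c ≤ Mxe d ∧ ∀ V, pse d V ≤ pse c V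

lemma pse_succ {n : ℕ} (c : Fin n →₀ ℕ) (i : Fin n) :
    pse c (i.1 + 1) = pse c i.1 + c i := by
  unfold pse
  have key : ∀ j : Fin n, (if j.1 + 1 ≤ i.1 + 1 then c j else 0)
      = (if j.1 + 1 ≤ i.1 then c j else 0) + (if j = i then c j else 0) := by
    intro j
    by_cases hji : j = i
    · subst hji; simp
    · have hne : j.1 ≠ i.1 := fun h => hji (Fin.ext h)
      rw [if_neg hji, add_zero]
      by_cases h1 : j.1 + 1 ≤ i.1
      · rw [if_pos h1, if_pos (by omega)]
      · rw [if_neg h1, if_neg (by omega)]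
  simp only [key]
  rw [Finset.sum_add_distrib, Finset.sum_ite_eq' Finset.univ i]
  simp

lemma eq_of_pse_eq {n : ℕ} {c d : Fin n →₀ ℕ} (h : ∀ V, pse c V = pse d V) : c = d := by
  apply Finsupp.ext
  intro i
  have h1 := pse_succ c i
  have h2 := pse_succ d i
  have h3 := h (i.1 + 1)
  have h4 := h i.1
  omega

lemma rP_trans {n : ℕ} {x c d : Fin n →₀ ℕ} (h1 : rP x c) (h2 : rP c d) : rP x d := by
  refine ⟨?_, le_trans h1.2.1 h2.2.1, fun V => le_trans (h2.2.2 V) (h1.2.2 V)⟩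
  rintro rfl
  apply h2.1
  apply eq_of_pse_eq
  intro V
  exact le_antisymm (h1.2.2 V) (h2.2.2 V)

lemma rP_irrefl {n : ℕ} (c : Fin n →₀ ℕ) : ¬ rP c c := fun h => h.1 rfl

lemma bounded_finite (n B : ℕ) : {c : Fin n →₀ ℕ | ∀ i, c i ≤ B}.Finite := by
  apply Set.Finite.subset (Set.Finite.image (⇑Finsupp.equivFunOnFinite.symm)
    (Set.Finite.pi (fun _ : Fin n => Set.finite_Iic B)))
  intro c hc
  refine ⟨⇑c, ?_, by simp⟩
  intro i _
  exact hc i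

lemma rP_lowerset_finite {n : ℕ} (d : Fin n →₀ ℕ) : {c : Fin n →₀ ℕ | rP c d}.Finite := by
  apply Set.Finite.subset (bounded_finite n (Mxe d))
  intro c hc i
  exact le_trans (Finset.le_sup (Finset.mem_univ i)) hc.2.1

lemma rP_wf (n : ℕ) : WellFounded (@rP n) := by
  constructor
  suffices H : ∀ (N : ℕ) (d : Fin n →₀ ℕ), (rP_lowerset_finite d).toFinset.card ≤ N → Acc rP d by
    intro d; exact H _ d le_rfl
  intro N
  induction N with
  | zero =>
    intro d hd
    constructor
    intro c hc
    exfalso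
    have : c ∈ (rP_lowerset_finite d).toFinset := (Set.Finite.mem_toFinset _).mpr hc
    have := Finset.card_pos.mpr ⟨c, this⟩
    omega
  | succ N ih =>
    intro d hd
    constructor
    intro c hc
    apply ih
    have hsub : (rP_lowerset_finite c).toFinset ⊆ (rP_lowerset_finite d).toFinset.erase c := by
      intro x hx
      rw [Set.Finite.mem_toFinset] at hx
      rw [Finset.mem_erase, Set.Finite.mem_toFinset]
      exact ⟨hx.1, rP_trans hx hc⟩
    have hmem : c ∈ (rP_lowerset_finite d).toFinset := (Set.Finite.mem_toFinset _).mpr hc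
    have h1 := Finset.card_le_card hsub
    have h2 := Finset.card_erase_of_mem hmem
    have h3 := Finset.card_pos.mpr ⟨c, hmem⟩
    omega

lemma exists_rP_maximal {n : ℕ} (s : Finset (Fin n →₀ ℕ)) (hs : s.Nonempty) :
    ∃ m ∈ s, ∀ x ∈ s, ¬ rP m x := by
  suffices H : ∀ (N : ℕ) (s : Finset (Fin n →₀ ℕ)), s.card ≤ N → s.Nonempty →
      ∃ m ∈ s, ∀ x ∈ s, ¬ rP m x by
    exact H s.card s le_rfl hs
  intro N
  induction N with
  | zero =>
    intro s hcard hne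
    exfalso
    have := Finset.card_pos.mpr hne
    omega
  | succ N ih =>
    intro s hcard hne
    classical
    obtain ⟨a, ha⟩ := hne
    by_cases hmax : ∀ x ∈ s, ¬ rP a x
    · exact ⟨a, ha, hmax⟩
    · push_neg at hmax
      obtain ⟨x, hx, hax⟩ := hmax
      set s' := s.filter (fun y => rP a y) with hs'
      have hx' : x ∈ s' := Finset.mem_filter.mpr ⟨hx, hax⟩
      have hane : a ∉ s' := by
        intro hc
        exact rP_irrefl a (Finset.mem_filter.mp hc).2
      have hsub : s' ⊂ s := ⟨Finset.filter_subset _ _, fun h => hane (h ha)⟩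
      have hlt : s'.card < s.card := Finset.card_lt_card hsub
      obtain ⟨m, hm, hmmax⟩ := ih s' (by omega) ⟨x, hx'⟩
      refine ⟨m, Finset.filter_subset _ _ hm, ?_⟩
      intro y hy hmy
      apply hmmax y _ hmy
      exact Finset.mem_filter.mpr ⟨hy, rP_trans (Finset.mem_filter.mp hm).2 hmy⟩

lemma listMax_attained (l : List ℕ) : listMax l = 0 ∨ ∃ i, i < l.length ∧ l.getD i 0 = listMax l := by
  induction l with
  | nil => exact Or.inl rfl
  | cons h t ih =>
    rcases le_total h (listMax t) with hle | hle
    · rcases ih with h0 | ⟨i, hi, hgd⟩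
      · left
        unfold listMax at *
        rw [List.foldr_cons, h0, Nat.max_zero]
        rw [h0] at hle
        omega
      · right
        refine ⟨i + 1, by simpa using hi, ?_⟩
        unfold listMax at *
        rw [List.getD_cons_succ, List.foldr_cons, max_eq_right hle]
        exact hgd
    · right
      refine ⟨0, by simp, ?_⟩
      unfold listMax at *
      rw [List.getD_cons_zero, List.foldr_cons, max_eq_left hle]

lemma Mxe_Ea {n : ℕ} {a : List ℕ} (ha : a.length = n) : Mxe (Ea n a) = listMax a := by
  apply le_antisymm
  · apply Finset.sup_le
    intro i _
    rw [Ea_apply]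
    exact getD_le_listMax a i.1
  · rcases listMax_attained a with h0 | ⟨i, hi, hgd⟩
    · omega
    · rw [← hgd]
      have hin : i < n := by omega
      have : a.getD i 0 = Ea n a ⟨i, hin⟩ := (Ea_apply n a ⟨i, hin⟩).symm
      rw [this]
      exact Finset.le_sup (Finset.mem_univ _)

lemma pse_expw {n : ℕ} (w : ℕ → ℕ) (V : ℕ) :
    pse (expw n w) V = ∑ v ∈ Finset.Icc 1 (min V n), w v := by
  rw [sum_Icc_one]
  unfold pse
  rw [show (∑ i : Fin n, if i.1 + 1 ≤ V then (expw n w) i else 0)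
      = ∑ i ∈ Finset.range n, (if i + 1 ≤ V then w (i + 1) else 0) from
    Fin.sum_univ_eq_sum_range (fun i => if i + 1 ≤ V then w (i + 1) else 0) n]
  rw [← Finset.sum_subset (Finset.range_subset_range.mpr (min_le_right V n))]
  · apply Finset.sum_congr rfl
    intro i hi
    rw [Finset.mem_range] at hi
    rw [if_pos (by omega)]
  · intro i hi hni
    rw [Finset.mem_range] at hi hni
    rw [if_neg (by omega)]

lemma pse_Ea {n : ℕ} {a : List ℕ} (ha : a.length = n) (V : ℕ) :
    pse (Ea n a) V = (a.take (min V n)).sum := by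
  unfold Ea
  rw [pse_expw, icc_sum_getD a _ (by omega)]

lemma coeff_quasi_rP {n : ℕ} {a : List ℕ} {m : Fin n →₀ ℕ} (ha : a.length = n)
    (h : MvPolynomial.coeff m (quasiLascouxF n a) ≠ 0) (hne : m ≠ Ea n a) :
    rP m (Ea n a) := by
  obtain ⟨b, F, hdom, hpos, hF, hwt⟩ := coeff_quasi_ne_zero h
  have hb : b.length = n := by rw [hdom.1, ha]
  refine ⟨hne, ?_, ?_⟩
  · rw [Mxe_Ea ha]
    apply Finset.sup_le
    intro i _
    have : m i = wtF b F (i.1 + 1) := by rw [← hwt, expw_apply]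
    rw [this, ← listMax_posPart a, ← hpos, listMax_posPart b]
    exact wt_le_listMax hF _
  · intro V
    rw [pse_Ea ha, ← hwt, pse_expw]
    exact le_trans (hdom.2 _) (sum_wt_ge hF _)

/-! ### Final assembly -/

lemma Ea_ofFn {n : ℕ} (m : Fin n →₀ ℕ) : Ea n (List.ofFn ⇑m) = m := by
  apply Finsupp.ext
  intro i
  rw [Ea_apply]
  rw [List.getD_eq_getElem _ _ (by simp [i.2])]
  simp

lemma Ea_inj {n : ℕ} {a b : List ℕ} (ha : a.length = n) (hb : b.length = n)
    (h : Ea n a = Ea n b) : a = b := by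
  apply List.ext_getElem (by omega)
  intro i h1 h2
  have hi : i < n := by omega
  have := DFunLike.congr_fun h ⟨i, hi⟩
  rw [Ea_apply, Ea_apply] at this
  rw [List.getD_eq_getElem _ _ h1, List.getD_eq_getElem _ _ h2] at this
  exact this

lemma monomial_mem_span (n : ℕ) (m : Fin n →₀ ℕ) (g : Polynomial ℤ) :
    (MvPolynomial.monomial m g) ∈ Submodule.span ℤ
      (Set.range (fun p : ℕ × {l : List ℕ // l.length = n} =>
        MvPolynomial.C (Polynomial.X ^ p.1) * quasiLascouxF n p.2.1)) := by
  induction m using (rP_wf n).induction generalizing g with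
  | _ m IH =>
  set Sp := Submodule.span ℤ
      (Set.range (fun p : ℕ × {l : List ℕ // l.length = n} =>
        MvPolynomial.C (Polynomial.X ^ p.1) * quasiLascouxF n p.2.1)) with hSp
  set a : List ℕ := List.ofFn ⇑m with hadef
  have ha : a.length = n := List.length_ofFn
  have hEa : Ea n a = m := Ea_ofFn m
  set Q := quasiLascouxF n a with hQdef
  have hcoeffm : MvPolynomial.coeff m Q = 1 := by
    rw [← hEa]; exact coeff_Ea_quasi ha
  have hQspan : ∀ gq : Polynomial ℤ, MvPolynomial.C gq * Q ∈ Sp := by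
    intro gq
    have hgq : MvPolynomial.C gq * Q
        = ∑ k ∈ gq.support, gq.coeff k • (MvPolynomial.C (Polynomial.X ^ k) * Q) := by
      conv_lhs => rw [gq.as_sum_support]
      rw [map_sum, Finset.sum_mul]
      apply Finset.sum_congr rfl
      intro k _
      rw [← Polynomial.smul_X_eq_monomial, map_zsmul, smul_mul_assoc]
    rw [hgq]
    apply Submodule.sum_mem
    intro k _
    apply Submodule.smul_mem
    exact Submodule.subset_span ⟨(k, ⟨a, ha⟩), rfl⟩
  have hm : m ∈ Q.support := by
    rw [MvPolynomial.mem_support_iff, hcoeffm]; exact one_ne_zero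
  have hQ : Q = MvPolynomial.monomial m 1
      + ∑ m' ∈ Q.support.erase m, MvPolynomial.monomial m' (MvPolynomial.coeff m' Q) := by
    conv_lhs => rw [← MvPolynomial.support_sum_monomial_coeff Q]
    rw [← Finset.add_sum_erase _ _ hm, hcoeffm]
  set R : MvPolynomial (Fin n) (Polynomial ℤ) := Q - MvPolynomial.monomial m 1 with hRdef
  have hR : R = ∑ m' ∈ Q.support.erase m, MvPolynomial.monomial m' (MvPolynomial.coeff m' Q) := by
    rw [hRdef]
    conv_lhs => rw [hQ]
    abel
  have hkey : MvPolynomial.monomial m g = MvPolynomial.C g * Q - MvPolynomial.C g * R := by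
    rw [hRdef, mul_sub, sub_sub_cancel, MvPolynomial.C_mul_monomial, mul_one]
  rw [hkey]
  apply Submodule.sub_mem _ (hQspan g)
  rw [hR, Finset.mul_sum]
  apply Submodule.sum_mem
  intro m' hm'
  rw [Finset.mem_erase] at hm'
  have hc' : MvPolynomial.coeff m' Q ≠ 0 := MvPolynomial.mem_support_iff.mp hm'.2
  have hrp : rP m' m := by
    rw [← hEa]
    exact coeff_quasi_rP ha hc' (by rw [hEa]; exact hm'.1)
  rw [MvPolynomial.C_mul_monomial]
  exact IH m' hrp _

theorem stmt13 (n : ℕ) :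
    (∀ f : MvPolynomial (Fin n) (Polynomial ℤ),
        f ∈ Submodule.span ℤ (Set.range (fun p : ℕ × {l : List ℕ // l.length = n} =>
          MvPolynomial.C (Polynomial.X ^ p.1) * quasiLascouxF n p.2.1))) ∧
    LinearIndependent ℤ (fun p : ℕ × {l : List ℕ // l.length = n} =>
      MvPolynomial.C (Polynomial.X ^ p.1) * quasiLascouxF n p.2.1) := by
  constructor
  · intro f
    rw [← MvPolynomial.support_sum_monomial_coeff f]
    apply Submodule.sum_mem
    intro m _
    exact monomial_mem_span n m _
  · rw [linearIndependent_iff]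
    intro l hl
    by_contra hlne
    have hsupp : l.support.Nonempty := Finsupp.support_nonempty_iff.mpr hlne
    set T : Finset (Fin n →₀ ℕ) := l.support.image (fun p => Ea n p.2.1) with hT
    have hTne : T.Nonempty := hsupp.image _
    obtain ⟨m, hmT, hmax⟩ := exists_rP_maximal T hTne
    obtain ⟨p₀, hp₀, hp₀m⟩ := Finset.mem_image.mp hmT
    -- coefficient of m
    have h0 := congrArg (MvPolynomial.coeff m) hl
    rw [Finsupp.linearCombination_apply, Finsupp.sum, MvPolynomial.coeff_sum,
      MvPolynomial.coeff_zero] at h0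
    have hterm : ∀ p ∈ l.support,
        MvPolynomial.coeff m (l p • (MvPolynomial.C (Polynomial.X ^ p.1) * quasiLascouxF n p.2.1))
        = l p • (Polynomial.X ^ p.1 * MvPolynomial.coeff m (quasiLascouxF n p.2.1)) := by
      intro p _
      rw [MvPolynomial.coeff_smul, MvPolynomial.coeff_C_mul]
    rw [Finset.sum_congr rfl hterm] at h0
    have h1 := congrArg (Polynomial.coeff · p₀.1) h0
    simp only [Polynomial.finset_sum_coeff, Polynomial.coeff_smul, Polynomial.coeff_zero] at h1
    have hsingle : ∀ p ∈ l.support, p ≠ p₀ →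
        l p • (Polynomial.X ^ p.1 * MvPolynomial.coeff m (quasiLascouxF n p.2.1)).coeff p₀.1
          = 0 := by
      intro p hp hne
      by_cases hc : MvPolynomial.coeff m (quasiLascouxF n p.2.1) = 0
      · rw [hc, mul_zero, Polynomial.coeff_zero, smul_zero]
      · have hEam : Ea n p.2.1 = m := by
          by_contra hnem
          have hrp := coeff_quasi_rP p.2.2 hc (fun h => hnem h.symm)
          exact hmax _ (Finset.mem_image_of_mem _ hp) hrp
        have hnum : MvPolynomial.coeff m (quasiLascouxF n p.2.1) = 1 :=
          hEam ▸ coeff_Ea_quasi p.2.2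
        have hlist : p.2 = p₀.2 :=
          Subtype.ext (Ea_inj p.2.2 p₀.2.2 (by rw [hEam, hp₀m]))
        have hfst : p.1 ≠ p₀.1 := by
          intro h
          exact hne (Prod.ext h hlist)
        rw [hnum, mul_one, Polynomial.coeff_X_pow, if_neg (fun h => hfst h.symm), smul_zero]
    rw [Finset.sum_eq_single_of_mem p₀ hp₀ hsingle] at h1
    have hnum₀ : MvPolynomial.coeff m (quasiLascouxF n p₀.2.1) = 1 :=
      hp₀m ▸ coeff_Ea_quasi p₀.2.2
    rw [hnum₀, mul_one, Polynomial.coeff_X_pow, if_pos rfl, smul_eq_mul, mul_one] at h1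
    exact (Finsupp.mem_support_iff.mp hp₀) h1
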